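/- Let R be a discrete valuation ring with fraction field K and residue field k. Let F ∈ K((X⁻¹)) be a formal Laurent series all of whose coefficients lie in R, and let F̄ ∈ k((X⁻¹)) be its coefficientwise reduction. Suppose x, y ∈ K[X] with y ≠ 0 satisfy deg(yF − x) < −deg y (so x/y is a convergent of the continued fraction expansion of F). Then there exists c ∈ K, c ≠ 0, such that cx and cy both lie in R[X] and their reductions x̄ and ȳ are not both zero; moreover for any such c one has ȳ ≠ 0 and deg(ȳF̄ − x̄) < −deg ȳ (so x̄/ȳ is a convergent of F̄). -/

import Mathlib

open Polynomial HahnSeries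
open scoped Classical

/-- The degree of a formal Laurent series in `X⁻¹`: writing `F = ∑ f_i X^{-i}`
(a `LaurentSeries` in the variable `t = X⁻¹`), `deg F = -min {i : f_i ≠ 0}`,
with `deg 0 = ⊥`. -/
noncomputable def lsDeg {K : Type*} [Field K] (F : LaurentSeries K) : WithBot ℤ :=
  if F = 0 then ⊥ else ((-F.order : ℤ) : WithBot ℤ)

/-- A polynomial in `X` viewed as an element of `K((X⁻¹))`, i.e. evaluated at the
inverse `X = t⁻¹` of the `LaurentSeries` variable `t`. -/
noncomputable def polyToLS {K : Type*} [Field K] (p : K[X]) : LaurentSeries K :=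
  Polynomial.aeval (HahnSeries.single (-1 : ℤ) (1 : K)) p

lemma ls_finsum_coeff {α : Type*} {K : Type*} [Field K] (s : Finset α)
    (f : α → LaurentSeries K) (n : ℤ) :
    (∑ i ∈ s, f i).coeff n = ∑ i ∈ s, (f i).coeff n :=
  map_sum (HahnSeries.coeff.addMonoidHom n) f s

lemma polyToLS_eq_sum {K : Type*} [Field K] (p : K[X]) {N : ℕ} (h : p.natDegree < N) :
    polyToLS p = ∑ i ∈ Finset.range N, HahnSeries.single (-(i : ℤ)) (p.coeff i) := by
  conv_lhs => rw [polyToLS, p.as_sum_range' N h, map_sum]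
  refine Finset.sum_congr rfl fun i _ => ?_
  rw [aeval_monomial, single_pow, one_pow]
  have hsm : (i : ℕ) • (-1 : ℤ) = -(i : ℤ) := by simp
  rw [hsm, HahnSeries.algebraMap_apply',
    show algebraMap K (PowerSeries K) (p.coeff i) = PowerSeries.C (p.coeff i) from rfl,
    HahnSeries.ofPowerSeries_C, HahnSeries.C_apply, HahnSeries.single_mul_single, zero_add,
    mul_one]

lemma polyToLS_coeff {K : Type*} [Field K] (p : K[X]) {N : ℕ} (h : p.natDegree < N) (n : ℤ) :
    (polyToLS p).coeff n =
      ∑ i ∈ Finset.range N, if n = -(i : ℤ) then p.coeff i else 0 := by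
  rw [polyToLS_eq_sum p h, ls_finsum_coeff]
  refine Finset.sum_congr rfl fun i _ => ?_
  rw [HahnSeries.coeff_single]
  by_cases hn : n = -(i : ℤ) <;> simp [hn]

lemma polyToLS_mul_coeff {K : Type*} [Field K] (p : K[X]) (F : LaurentSeries K) {N : ℕ}
    (h : p.natDegree < N) (n : ℤ) :
    (polyToLS p * F).coeff n =
      ∑ i ∈ Finset.range N, p.coeff i * F.coeff (n + (i : ℤ)) := by
  rw [polyToLS_eq_sum p h, Finset.sum_mul, ls_finsum_coeff]
  refine Finset.sum_congr rfl fun i _ => ?_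
  have hn : n = (n + (i : ℤ)) + (-(i : ℤ)) := by ring
  rw [hn, HahnSeries.coeff_single_mul_add]
  ring_nf

lemma lsDeg_lt_iff {K : Type*} [Field K] (S : LaurentSeries K) (d : ℤ) :
    lsDeg S < ((-d : ℤ) : WithBot ℤ) ↔ ∀ n ≤ d, S.coeff n = 0 := by
  unfold lsDeg
  split_ifs with h
  · subst h
    simp [WithBot.bot_lt_coe]
  · rw [WithBot.coe_lt_coe, neg_lt_neg_iff]
    constructor
    · intro hd n hn
      exact HahnSeries.coeff_eq_zero_of_lt_order (lt_of_le_of_lt hn hd)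
    · intro hc
      by_contra hle
      push_neg at hle
      exact (mt HahnSeries.coeff_order_eq_zero.mp h) (hc _ hle)

theorem reduction_of_convergent
    {R : Type*} [CommRing R] [IsDomain R] [IsDiscreteValuationRing R]
    {K : Type*} [Field K] [Algebra R K] [IsFractionRing R K]
    (F : LaurentSeries K) (Fbar : LaurentSeries (IsLocalRing.ResidueField R))
    (hF : ∀ n : ℤ, ∃ r : R, algebraMap R K r = F.coeff n)
    (hFbar : ∀ (n : ℤ) (r : R), algebraMap R K r = F.coeff n →
      Fbar.coeff n = IsLocalRing.residue R r)
    (x y : K[X]) (hy : y ≠ 0)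
    (hconv : lsDeg (polyToLS y * F - polyToLS x) < ((-(y.natDegree : ℤ) : ℤ) : WithBot ℤ)) :
    (∃ c : K, c ≠ 0 ∧ ∃ P Q : R[X],
        P.map (algebraMap R K) = Polynomial.C c * x ∧
        Q.map (algebraMap R K) = Polynomial.C c * y ∧
        ¬(P.map (IsLocalRing.residue R) = 0 ∧ Q.map (IsLocalRing.residue R) = 0)) ∧
    (∀ c : K, c ≠ 0 → ∀ P Q : R[X],
        P.map (algebraMap R K) = Polynomial.C c * x →
        Q.map (algebraMap R K) = Polynomial.C c * y →
        ¬(P.map (IsLocalRing.residue R) = 0 ∧ Q.map (IsLocalRing.residue R) = 0) →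
        Q.map (IsLocalRing.residue R) ≠ 0 ∧
        lsDeg (polyToLS (Q.map (IsLocalRing.residue R)) * Fbar -
            polyToLS (P.map (IsLocalRing.residue R))) <
          ((-(((Q.map (IsLocalRing.residue R)).natDegree : ℤ)) : ℤ) : WithBot ℤ)) := by
  have ιinj : Function.Injective (algebraMap R K) := IsFractionRing.injective R K
  set ι := algebraMap R K with hι
  set ρ := IsLocalRing.residue R with hρ
  constructor
  · -- Existence part
    obtain ⟨bx, hbx⟩ := IsLocalization.integerNormalization_map_to_map (nonZeroDivisors R) x
    obtain ⟨by', hby⟩ := IsLocalization.integerNormalization_map_to_map (nonZeroDivisors R) y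
    set P₀ : R[X] := Polynomial.C (by' : R) * IsLocalization.integerNormalization (nonZeroDivisors R) x with hP₀
    set Q₀ : R[X] := Polynomial.C (bx : R) * IsLocalization.integerNormalization (nonZeroDivisors R) y with hQ₀
    set d : R := (bx : R) * (by' : R) with hd
    have hdne : d ≠ 0 := mul_ne_zero (nonZeroDivisors.coe_ne_zero bx) (nonZeroDivisors.coe_ne_zero by')
    have hP₀map : P₀.map ι = Polynomial.C (ι d) * x := by
      rw [hP₀, Polynomial.map_mul, Polynomial.map_C, hbx]
      rw [← algebraMap_smul K (bx : R) x, Polynomial.smul_eq_C_mul, hd, map_mul, Polynomial.C_mul]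
      ring
    have hQ₀map : Q₀.map ι = Polynomial.C (ι d) * y := by
      rw [hQ₀, Polynomial.map_mul, Polynomial.map_C, hby]
      rw [← algebraMap_smul K (by' : R) y, Polynomial.smul_eq_C_mul, hd, map_mul, Polynomial.C_mul]
      ring
    have hιd : ι d ≠ 0 := fun h => hdne (ιinj (by rw [map_zero]; exact h))
    have hQ₀ne : Q₀ ≠ 0 := by
      intro h
      have : Q₀.map ι = 0 := by rw [h, Polynomial.map_zero]
      rw [hQ₀map] at this
      exact (mul_ne_zero (Polynomial.C_ne_zero.mpr hιd) hy) this
    -- the ideal generated by all coefficients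
    set I : Ideal R := Ideal.span ((P₀.coeffs ∪ Q₀.coeffs : Finset R) : Set R) with hI
    have hIne : I ≠ ⊥ := by
      intro h
      obtain ⟨i, hi⟩ : ∃ i, Q₀.coeff i ≠ 0 := by
        by_contra hall
        push_neg at hall
        exact hQ₀ne (Polynomial.ext fun i => by simpa using hall i)
      have hmem : Q₀.coeff i ∈ I := Ideal.subset_span (by
        simp only [Finset.coe_union, Set.mem_union]
        exact Or.inr (Polynomial.coeff_mem_coeffs hi))
      rw [h] at hmem
      exact hi (Ideal.mem_bot.mp hmem)
    set g : R := Submodule.IsPrincipal.generator I with hg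
    have hgspan : Ideal.span {g} = I := Ideal.span_singleton_generator I
    have hgne : g ≠ 0 := by
      intro h
      exact hIne ((Submodule.IsPrincipal.eq_bot_iff_generator_eq_zero I).mpr h)
    have hgdvd : ∀ p : R[X], (∀ i, p.coeff i ≠ 0 → p.coeff i ∈ (p.coeffs : Set R)) →
        (∀ i, p.coeff i ∈ I) → Polynomial.C g ∣ p := by
      intro p _ hp
      rw [Polynomial.C_dvd_iff_dvd_coeff]
      intro i
      rw [← Ideal.mem_span_singleton, hgspan]
      exact hp i
    have hPI : ∀ i, P₀.coeff i ∈ I := by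
      intro i
      by_cases h : P₀.coeff i = 0
      · rw [h]; exact I.zero_mem
      · exact Ideal.subset_span (by
          simp only [Finset.coe_union, Set.mem_union]
          exact Or.inl (Polynomial.coeff_mem_coeffs h))
    have hQI : ∀ i, Q₀.coeff i ∈ I := by
      intro i
      by_cases h : Q₀.coeff i = 0
      · rw [h]; exact I.zero_mem
      · exact Ideal.subset_span (by
          simp only [Finset.coe_union, Set.mem_union]
          exact Or.inr (Polynomial.coeff_mem_coeffs h))
    obtain ⟨P, hPdef⟩ : Polynomial.C g ∣ P₀ := by
      rw [Polynomial.C_dvd_iff_dvd_coeff]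
      intro i; rw [← Ideal.mem_span_singleton, hgspan]; exact hPI i
    obtain ⟨Q, hQdef⟩ : Polynomial.C g ∣ Q₀ := by
      rw [Polynomial.C_dvd_iff_dvd_coeff]
      intro i; rw [← Ideal.mem_span_singleton, hgspan]; exact hQI i
    have hιg : ι g ≠ 0 := fun h => hgne (ιinj (by rw [map_zero]; exact h))
    refine ⟨ι d / ι g, div_ne_zero hιd hιg, P, Q, ?_, ?_, ?_⟩
    · refine mul_left_cancel₀ (Polynomial.C_ne_zero.mpr hιg) ?_
      calc Polynomial.C (ι g) * P.map ι = (Polynomial.C g * P).map ι := by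
            rw [Polynomial.map_mul, Polynomial.map_C]
        _ = Polynomial.C (ι d) * x := by rw [← hPdef, hP₀map]
        _ = Polynomial.C (ι g) * (Polynomial.C (ι d / ι g) * x) := by
            rw [← mul_assoc, ← Polynomial.C_mul, mul_div_cancel₀ _ hιg]
    · refine mul_left_cancel₀ (Polynomial.C_ne_zero.mpr hιg) ?_
      calc Polynomial.C (ι g) * Q.map ι = (Polynomial.C g * Q).map ι := by
            rw [Polynomial.map_mul, Polynomial.map_C]
        _ = Polynomial.C (ι d) * y := by rw [← hQdef, hQ₀map]
        _ = Polynomial.C (ι g) * (Polynomial.C (ι d / ι g) * y) := by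
            rw [← mul_assoc, ← Polynomial.C_mul, mul_div_cancel₀ _ hιg]
    · rintro ⟨hPz, hQz⟩
      have hmax : ∀ p : R[X], p.map ρ = 0 → ∀ i, p.coeff i ∈ IsLocalRing.maximalIdeal R := by
        intro p hp i
        have : (p.map ρ).coeff i = 0 := by rw [hp]; simp
        rw [Polynomial.coeff_map] at this
        rwa [hρ, IsLocalRing.residue_eq_zero_iff] at this
      have hsub : I ≤ Ideal.span {g} * IsLocalRing.maximalIdeal R := by
        rw [hI, Ideal.span_le]
        intro z hz
        simp only [Finset.coe_union, Set.mem_union] at hz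
        have : ∃ i : ℕ, z = P₀.coeff i ∨ z = Q₀.coeff i := by
          rcases hz with hz | hz
          · obtain ⟨i, _, hi⟩ := Polynomial.mem_coeffs_iff.mp hz
            exact ⟨i, Or.inl hi⟩
          · obtain ⟨i, _, hi⟩ := Polynomial.mem_coeffs_iff.mp hz
            exact ⟨i, Or.inr hi⟩
        obtain ⟨i, hi | hi⟩ := this
        · rw [hi, hPdef, Polynomial.coeff_C_mul]
          exact Ideal.mul_mem_mul (Ideal.mem_span_singleton_self g) (hmax P hPz i)
        · rw [hi, hQdef, Polynomial.coeff_C_mul]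
          exact Ideal.mul_mem_mul (Ideal.mem_span_singleton_self g) (hmax Q hQz i)
      have hgmem : g ∈ Ideal.span {g} * IsLocalRing.maximalIdeal R :=
        hsub (Submodule.IsPrincipal.generator_mem I)
      rw [Ideal.mem_span_singleton_mul] at hgmem
      obtain ⟨t, ht, hgt⟩ := hgmem
      have : g * (t - 1) = 0 := by rw [mul_sub, mul_one, hgt, sub_self]
      have ht1 : t = 1 := by
        rcases mul_eq_zero.mp this with h | h
        · exact absurd h hgne
        · exact sub_eq_zero.mp h
      rw [ht1] at ht
      exact (IsLocalRing.maximalIdeal.isMaximal R).ne_top (Ideal.eq_top_of_isUnit_mem _ ht isUnit_one)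
  · -- Main part
    intro c hc P Q hP hQ hne
    -- choose lifts of the coefficients of F
    set r : ℤ → R := fun m => Classical.choose (hF m) with hr
    have hrspec : ∀ m, ι (r m) = F.coeff m := fun m => Classical.choose_spec (hF m)
    have hrbar : ∀ m, Fbar.coeff m = ρ (r m) := fun m => hFbar m (r m) (hrspec m)
    set N : ℕ := max P.natDegree Q.natDegree + 1 with hN
    have hPN : P.natDegree < N := lt_of_le_of_lt (le_max_left _ _) (Nat.lt_succ_self _)
    have hQN : Q.natDegree < N := lt_of_le_of_lt (le_max_right _ _) (Nat.lt_succ_self _)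
    have hPmapN : (P.map ι).natDegree < N := lt_of_le_of_lt Polynomial.natDegree_map_le hPN
    have hQmapN : (Q.map ι).natDegree < N := lt_of_le_of_lt Polynomial.natDegree_map_le hQN
    have hPbarN : (P.map ρ).natDegree < N := lt_of_le_of_lt Polynomial.natDegree_map_le hPN
    have hQbarN : (Q.map ρ).natDegree < N := lt_of_le_of_lt Polynomial.natDegree_map_le hQN
    have hyQ : y.natDegree = (Q.map ι).natDegree := by
      rw [hQ, Polynomial.natDegree_C_mul hc]
    have hxP : x.natDegree ≤ P.natDegree := by
      have : (Polynomial.C c * x).natDegree = x.natDegree := Polynomial.natDegree_C_mul hc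
      rw [← this, ← hP]
      exact Polynomial.natDegree_map_le
    have hxN : x.natDegree < N := lt_of_le_of_lt hxP hPN
    have hyN : y.natDegree < N := by rw [hyQ]; exact hQmapN
    -- the coefficients over K vanish in low degree
    have hKzero : ∀ n : ℤ, n ≤ (y.natDegree : ℤ) →
        (polyToLS (Q.map ι) * F).coeff n - (polyToLS (P.map ι)).coeff n = 0 := by
      intro n hn
      have h0 : (polyToLS y * F - polyToLS x).coeff n = 0 :=
        (lsDeg_lt_iff _ (y.natDegree : ℤ)).mp hconv n hn
      rw [HahnSeries.coeff_sub] at h0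
      rw [hQ, hP, polyToLS_mul_coeff _ _ (by rw [← hQ]; exact hQmapN) n,
        polyToLS_coeff _ (by rw [← hP]; exact hPmapN) n]
      have e1 : ∑ i ∈ Finset.range N, (Polynomial.C c * y).coeff i * F.coeff (n + (i : ℤ))
          = c * ∑ i ∈ Finset.range N, y.coeff i * F.coeff (n + (i : ℤ)) := by
        rw [Finset.mul_sum]
        exact Finset.sum_congr rfl fun i _ => by rw [Polynomial.coeff_C_mul]; ring
      have e2 : (∑ i ∈ Finset.range N, if n = -(i : ℤ) then (Polynomial.C c * x).coeff i else 0)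
          = c * ∑ i ∈ Finset.range N, if n = -(i : ℤ) then x.coeff i else 0 := by
        rw [Finset.mul_sum]
        refine Finset.sum_congr rfl fun i _ => ?_
        rw [Polynomial.coeff_C_mul]
        split_ifs <;> ring
      rw [e1, e2, ← polyToLS_mul_coeff y F hyN n, ← polyToLS_coeff x hxN n, ← mul_sub, h0,
        mul_zero]
    -- the element of R whose image computes the coefficient
    set E : ℤ → R := fun n =>
      (∑ i ∈ Finset.range N, Q.coeff i * r (n + (i : ℤ))) -
        ∑ i ∈ Finset.range N, if n = -(i : ℤ) then P.coeff i else 0 with hE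
    have hιE : ∀ n, ι (E n) =
        (polyToLS (Q.map ι) * F).coeff n - (polyToLS (P.map ι)).coeff n := by
      intro n
      rw [hE]
      simp only [map_sub, map_sum]
      rw [polyToLS_mul_coeff _ _ hQmapN n, polyToLS_coeff _ hPmapN n]
      congr 1
      · exact Finset.sum_congr rfl fun i _ => by
          rw [map_mul, hrspec, Polynomial.coeff_map]
      · exact Finset.sum_congr rfl fun i _ => by
          rw [apply_ite ι, map_zero, Polynomial.coeff_map]
    have hρE : ∀ n, ρ (E n) =
        (polyToLS (Q.map ρ) * Fbar).coeff n - (polyToLS (P.map ρ)).coeff n := by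
      intro n
      rw [hE]
      simp only [map_sub, map_sum]
      rw [polyToLS_mul_coeff _ _ hQbarN n, polyToLS_coeff _ hPbarN n]
      congr 1
      · exact Finset.sum_congr rfl fun i _ => by
          rw [map_mul, ← hrbar, Polynomial.coeff_map]
      · exact Finset.sum_congr rfl fun i _ => by
          rw [apply_ite ρ, map_zero, Polynomial.coeff_map]
    have hkey : ∀ n : ℤ, n ≤ (y.natDegree : ℤ) →
        (polyToLS (Q.map ρ) * Fbar - polyToLS (P.map ρ)).coeff n = 0 := by
      intro n hn
      have hE0 : E n = 0 := by
        apply ιinj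
        rw [hιE n, hKzero n hn, map_zero]
      rw [HahnSeries.coeff_sub, ← hρE n, hE0, map_zero]
    have hQbar : Q.map ρ ≠ 0 := by
      intro h0
      apply hne
      refine ⟨?_, h0⟩
      ext m
      have hm : (-(m : ℤ)) ≤ (y.natDegree : ℤ) :=
        le_trans (neg_nonpos.mpr (Int.ofNat_nonneg m)) (Int.ofNat_nonneg _)
      have := hkey (-(m : ℤ)) hm
      have hz : polyToLS (0 : Polynomial (IsLocalRing.ResidueField R)) = 0 := by
        unfold polyToLS; exact map_zero _
      rw [h0, hz] at this
      simp only [zero_mul, zero_sub, HahnSeries.coeff_neg, neg_eq_zero] at this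
      by_cases hmN : m < N
      · rw [polyToLS_coeff _ hPbarN (-(m : ℤ))] at this
        have : ∑ i ∈ Finset.range N, (if i = m then (P.map ρ).coeff i else 0) = 0 := by
          rw [← this]
          exact Finset.sum_congr rfl fun i _ => by
            congr 1
            simp [eq_comm, neg_inj, Int.natCast_inj]
        rw [Finset.sum_ite_eq' (Finset.range N) m] at this
        simpa [Finset.mem_range.mpr hmN] using this
      · push_neg at hmN
        rw [Polynomial.coeff_eq_zero_of_natDegree_lt (lt_of_lt_of_le hPbarN hmN)]
        simp
    refine ⟨hQbar, ?_⟩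
    rw [lsDeg_lt_iff _ (((Q.map ρ).natDegree : ℤ))]
    intro n hn
    apply hkey
    refine le_trans hn ?_
    have h1 : (Q.map ρ).natDegree ≤ Q.natDegree := Polynomial.natDegree_map_le
    have h2 : Q.natDegree = y.natDegree := by
      rw [hyQ, Polynomial.natDegree_map_eq_of_injective ιinj]
    exact_mod_cast h2 ▸ h1
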